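/- Let 0 < r_J ≤ ⋯ ≤ r_1 < 1 (J ≥ 2), D the real root of ∑_j r_j^D = 1, f(s) = 1 − ∑_{j=1}^J r_j^s. Let 0 < ψ < π/2, μ = ψ² r_J^D / 8, and let σ_R be the unique real number with ∑_{j=1}^J r_j^{σ_R} = 1 + μ. Suppose t ∈ ℝ is such that there exists j_0 ∈ {1,…,J} whose reduced angle θ_{j_0}(t) (defined by θ_{j_0}(t) ≡ t log r_{j_0} mod 2π, −π ≤ θ_{j_0}(t) < π) satisfies |θ_{j_0}(t)| ≥ ψ. Then Re(f(σ_R + it)) ≥ μ. -/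

import Mathlib

open Complex

set_option maxHeartbeats 1000000 in
/-- with `f(s) = 1 - ∑ⱼ rⱼ^s`, `0 < ψ < π/2`, `μ = ψ² r_J^D/8` and
`σ_R` the real number with `∑ⱼ rⱼ^{σ_R} = 1 + μ`: if for some `j₀` the reduced
angle `θ_{j₀}(t)` of `t log r_{j₀}` satisfies `|θ_{j₀}(t)| ≥ ψ`, then
`Re(f(σ_R + it)) ≥ μ`. -/

theorem stmt_11
    (J : ℕ) (hJ : 2 ≤ J)
    (r : Fin J → ℝ) (hr0 : ∀ j, 0 < r j) (hr1 : ∀ j, r j < 1)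
    (hanti : Antitone r)
    (D : ℝ) (hD : ∑ j, r j ^ D = 1)
    (ψ : ℝ) (hψ0 : 0 < ψ) (hψ1 : ψ < Real.pi / 2)
    (μ : ℝ) (hμ : μ = ψ ^ 2 * r ⟨J - 1, by omega⟩ ^ D / 8)
    (σR : ℝ) (hσR : ∑ j, r j ^ σR = 1 + μ)
    (t : ℝ)
    (hangle : ∃ j₀ : Fin J, ∃ θ : ℝ, -Real.pi ≤ θ ∧ θ < Real.pi ∧
      (∃ m : ℤ, t * Real.log (r j₀) = θ + 2 * Real.pi * m) ∧ ψ ≤ |θ|) :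
    μ ≤ (1 - ∑ j, (r j : ℂ) ^ ((σR : ℂ) + (t : ℂ) * I)).re := by
  obtain ⟨j₀, θ, hθ1, hθ2, ⟨m, hm⟩, hθψ⟩ := hangle
  have hπ : (3.141592 : ℝ) < Real.pi := Real.pi_gt_d6
  have hπ' : Real.pi < 3.15 := Real.pi_lt_d2
  set jJ : Fin J := ⟨J - 1, by omega⟩ with hjJ
  -- real part of each term
  have hre : ∀ j : Fin J, ((r j : ℂ) ^ ((σR : ℂ) + (t : ℂ) * I)).re
      = r j ^ σR * Real.cos (t * Real.log (r j)) := by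
    intro j
    rw [Complex.cpow_def_of_ne_zero (by exact_mod_cast (hr0 j).ne'),
      ← Complex.ofReal_log (hr0 j).le]
    rw [Complex.exp_re]
    simp [Real.rpow_def_of_pos (hr0 j), mul_comm]
  -- D > 0
  have hDpos : 0 < D := by
    by_contra h
    push_neg at h
    have : ∀ j : Fin J, (1:ℝ) ≤ r j ^ D := fun j =>
      Real.one_le_rpow_of_pos_of_le_one_of_nonpos (hr0 j) (hr1 j).le h
    have : (J : ℝ) ≤ ∑ j, r j ^ D := by
      calc (J:ℝ) = ∑ _j : Fin J, (1:ℝ) := by simp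
      _ ≤ _ := Finset.sum_le_sum fun j _ => this j
    rw [hD] at this
    have : (2:ℝ) ≤ 1 := le_trans (by exact_mod_cast hJ) this
    linarith
  have hrJD0 : 0 < r jJ ^ D := Real.rpow_pos_of_pos (hr0 _) _
  have hrJD1 : r jJ ^ D < 1 := Real.rpow_lt_one (hr0 _).le (hr1 _) hDpos
  have hμpos : 0 < μ := by rw [hμ]; positivity
  have hμlt : μ < 1 := by
    have hψ2 : ψ ^ 2 < 4 := by nlinarith
    rw [hμ]
    nlinarith [mul_nonneg (sq_nonneg ψ) (by linarith : (0:ℝ) ≤ 1 - r jJ ^ D)]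
  -- σR ≤ D
  have hσRleD : σR ≤ D := by
    by_contra h
    push_neg at h
    have : ∑ j, r j ^ σR < ∑ j, r j ^ D :=
      Finset.sum_lt_sum_of_nonempty ⟨⟨0, by omega⟩, Finset.mem_univ _⟩ fun j _ =>
        Real.rpow_lt_rpow_of_exponent_gt (hr0 j) (hr1 j) h
    rw [hD, hσR] at this; linarith
  -- 0 ≤ σR
  have hσR0 : 0 ≤ σR := by
    by_contra h
    push_neg at h
    have h1 : ∀ j : Fin J, (1:ℝ) ≤ r j ^ σR := fun j =>
      Real.one_le_rpow_of_pos_of_le_one_of_nonpos (hr0 j) (hr1 j).le h.le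
    have : (J : ℝ) ≤ ∑ j, r j ^ σR := by
      calc (J:ℝ) = ∑ _j : Fin J, (1:ℝ) := by simp
      _ ≤ _ := Finset.sum_le_sum fun j _ => h1 j
    rw [hσR] at this
    have : (2:ℝ) ≤ 1 + μ := le_trans (by exact_mod_cast hJ) this
    linarith
  -- a j₀ ≥ r_J^D
  have hbase : r jJ ≤ r j₀ := hanti (by simp [hjJ, Fin.le_def]; omega)
  have ha0 : r jJ ^ D ≤ r j₀ ^ σR :=
    le_trans (Real.rpow_le_rpow_of_exponent_ge (hr0 _) (hr1 _).le hσRleD)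
      (Real.rpow_le_rpow (hr0 _).le hbase hσR0)
  -- cos bound at j₀
  have hcosθ : Real.cos (t * Real.log (r j₀)) = Real.cos θ := by
    rw [hm]
    have : θ + 2 * Real.pi * m = θ + (m : ℝ) * (2 * Real.pi) := by ring
    rw [this, Real.cos_add_int_mul_two_pi]
  have habs : |θ| ≤ Real.pi := abs_le.2 ⟨hθ1, hθ2.le⟩
  have hcos1 : Real.cos θ ≤ Real.cos ψ := by
    rw [← Real.cos_abs θ]
    exact Real.cos_le_cos_of_nonneg_of_le_pi hψ0.le habs hθψ
  -- 1 - cos ψ ≥ ψ²/4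
  have hcos2 : Real.cos ψ ≤ 1 - ψ ^ 2 / 4 := by
    have hc : ψ / 2 ≤ 1 := by linarith
    have hs : ψ / 2 - (ψ / 2) ^ 3 / 4 < Real.sin (ψ / 2) :=
      by have h := Real.sin_gt_sub_cube (x := ψ / 2) (by linarith); linarith [pow_pos (by linarith : (0:ℝ) < ψ / 2) 3]
    have hsq : Real.sin (ψ / 2) ^ 2 = 1 / 2 - Real.cos (2 * (ψ / 2)) / 2 :=
      Real.sin_sq_eq_half_sub _
    have h2 : 2 * (ψ / 2) = ψ := by ring
    rw [h2] at hsq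
    have hpos : 0 < ψ / 2 - (ψ / 2) ^ 3 / 4 := by nlinarith
    have hs2 : (ψ / 2 - (ψ / 2) ^ 3 / 4) ^ 2 ≤ Real.sin (ψ / 2) ^ 2 :=
      pow_le_pow_left₀ hpos.le hs.le 2
    have hx2 : (ψ / 2) ^ 2 ≤ 1 := by nlinarith
    have hterm1 : 0 ≤ (ψ / 2) ^ 2 * (1 - (ψ / 2) ^ 2) :=
      mul_nonneg (sq_nonneg _) (by linarith)
    have hid : 2 * (ψ / 2 - (ψ / 2) ^ 3 / 4) ^ 2 - ψ ^ 2 / 4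
        = (ψ / 2) ^ 2 * (1 - (ψ / 2) ^ 2) + ((ψ / 2) ^ 3) ^ 2 / 8 := by ring
    have hpoly : ψ ^ 2 / 4 ≤ 2 * (ψ / 2 - (ψ / 2) ^ 3 / 4) ^ 2 := by
      linarith [hterm1, sq_nonneg ((ψ / 2) ^ 3), hid]
    linarith
  -- sum decomposition
  have hre_sum : (1 - ∑ j, (r j : ℂ) ^ ((σR : ℂ) + (t : ℂ) * I)).re
      = 1 - ∑ j, r j ^ σR * Real.cos (t * Real.log (r j)) := by
    rw [Complex.sub_re, Complex.one_re, Complex.re_sum]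
    exact congrArg (1 - ·) (Finset.sum_congr rfl fun j _ => hre j)
  rw [hre_sum]
  have hsplit : ∑ j, r j ^ σR * Real.cos (t * Real.log (r j))
      = (1 + μ) - ∑ j, r j ^ σR * (1 - Real.cos (t * Real.log (r j))) := by
    rw [← hσR, ← Finset.sum_sub_distrib]
    congr 1; ext j; ring
  have hterm : ∀ j : Fin J, 0 ≤ r j ^ σR * (1 - Real.cos (t * Real.log (r j))) :=
    fun j => mul_nonneg (Real.rpow_nonneg (hr0 j).le _)
      (by linarith [Real.cos_le_one (t * Real.log (r j))])
  have hsingle : r j₀ ^ σR * (1 - Real.cos (t * Real.log (r j₀)))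
      ≤ ∑ j, r j ^ σR * (1 - Real.cos (t * Real.log (r j))) :=
    Finset.single_le_sum (fun j _ => hterm j) (Finset.mem_univ j₀)
  have hkey : 2 * μ ≤ r j₀ ^ σR * (1 - Real.cos (t * Real.log (r j₀))) := by
    rw [hcosθ]
    have h1 : ψ ^ 2 / 4 ≤ 1 - Real.cos θ := by linarith
    have h2 := mul_le_mul ha0 h1 (by positivity) (Real.rpow_nonneg (hr0 _).le _)
    have h3 : 2 * (ψ ^ 2 * r jJ ^ D / 8) = r jJ ^ D * (ψ ^ 2 / 4) := by ring
    rw [hμ, h3]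
    linarith
  linarith
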